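/- Let Γ be a simple graph with vertex set S, let A be a unital C*-algebra, and let (V_s)_{s∈S} satisfy the Toeplitz–Artin relations for Γ. Let s_1,…,s_m be a list of elements of S and let l ∈ S with s_i ≠ l for all i. Then V_l* · (∏_{i=1}^m (1 − V_{s_i} V_{s_i}*)) · V_l = ∏_{i : s_i adjacent to l in Γ} (1 − V_{s_i} V_{s_i}*), where the product on the right is taken over those indices i (in the same order) for which s_i is adjacent to l. -/

import Mathlib

/-- A family `(V s)` of elements of a unital C*-algebra `A` satisfies the
Toeplitz–Artin relations for a simple graph `Γ` if:
(1) each `V s` is an isometry;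
(2) `V s` commutes and *-commutes with `V t` whenever `s` and `t` are adjacent;
(3) `(V s)* (V t) = 0` whenever `s ≠ t` are non-adjacent. -/
def SatisfiesToeplitzArtin {S A : Type*} [Ring A] [StarRing A]
    (Γ : SimpleGraph S) (V : S → A) : Prop :=
  (∀ s, star (V s) * V s = 1) ∧
  (∀ s t, Γ.Adj s t → V s * V t = V t * V s) ∧
  (∀ s t, Γ.Adj s t → star (V s) * V t = V t * star (V s)) ∧
  (∀ s t, s ≠ t → ¬ Γ.Adj s t → star (V s) * V t = 0)

/-- Compressing a product of complementary range projections by an isometry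
`V l` (with `l` different from all the listed vertices) keeps exactly the
factors indexed by neighbours of `l`, in the same order. -/
theorem compress_defect_projection {S A : Type*}
    [NormedRing A] [StarRing A] [CStarRing A] [NormedAlgebra ℂ A]
    [StarModule ℂ A] [CompleteSpace A]
    (Γ : SimpleGraph S) [DecidableRel Γ.Adj]
    (V : S → A) (hTA : SatisfiesToeplitzArtin Γ V)
    (L : List S) (l : S) (hl : ∀ s ∈ L, s ≠ l) :
    star (V l) * (L.map fun s => (1 : A) - V s * star (V s)).prod * V l
      = ((L.filter fun s => Γ.Adj s l).map
          fun s => (1 : A) - V s * star (V s)).prod := by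
  obtain ⟨hiso, hcomm, hscomm, horth⟩ := hTA
  induction L with
  | nil => simpa using hiso l
  | cons s L ih =>
    have hsl : s ≠ l := hl s List.mem_cons_self
    have ih' := ih (fun t ht => hl t (List.mem_cons_of_mem _ ht))
    by_cases hadj : Γ.Adj s l
    · have c1 : star (V l) * V s = V s * star (V l) := hscomm l s hadj.symm
      have c2 : star (V l) * star (V s) = star (V s) * star (V l) := by
        calc star (V l) * star (V s) = star (V s * V l) := (star_mul _ _).symm
          _ = star (V l * V s) := by rw [hcomm s l hadj]
          _ = star (V s) * star (V l) := star_mul _ _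
      have h1 : star (V l) * (1 - V s * star (V s))
          = (1 - V s * star (V s)) * star (V l) := by
        rw [mul_sub, sub_mul, mul_one, one_mul, ← mul_assoc, c1, mul_assoc,
          c2, ← mul_assoc]
      rw [List.map_cons, List.prod_cons, List.filter_cons, if_pos (by simpa using hadj),
        List.map_cons, List.prod_cons, ← mul_assoc, h1, mul_assoc, mul_assoc,
        ← mul_assoc (star (V l)), ih']
    · have h0 : star (V l) * V s = 0 :=
        horth l s hsl.symm (fun h => hadj h.symm)
      have h1 : star (V l) * (1 - V s * star (V s)) = star (V l) := by
        rw [mul_sub, mul_one, ← mul_assoc, h0, zero_mul, sub_zero]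
      rw [List.map_cons, List.prod_cons, List.filter_cons, if_neg (by simpa using hadj),
        ← mul_assoc, h1, ih']
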